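/- Let w ∈ ℂ, λ ∈ ℂ with λ ≠ 0, and let h, x : ℂ → ℂ be analytic at w. Define, for z ≠ w, u(z) = −1/(z−w) + h(z), A(z) = [[u(z), λ],[1, −u(z)]], g(z) = [[1, 0],[−λ^{−1}/(z−w), 1]], and D(z) = [[0, 0],[λ^{−1}/(z−w), 0]] (which equals λ·∂_λ g(z)). Then for all z ≠ w in a punctured neighborhood of w, B(z) := g(z)A(z)g(z)^{−1} − g′(z)g(z)^{−1} − x(z)·D(z)g(z)^{−1} = [[h(z), λ],[1 − λ^{−1}(2h(z)+x(z))/(z−w), −h(z)]]. Consequently B(z) + λ^{−1}(2h(w)+x(w))/(z−w)·E₂₁ extends analytically to w (E₂₁ the elementary matrix with 1 in position (2,1)), and B extends analytically to w if and only if h(w) + x(w)/2 = 0. -/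

import Mathlib

open Topology

/-- The gauge matrix `g(z) = [[1, 0], [-λ⁻¹/(z-w), 1]]`. -/
noncomputable def gMat (w lam : ℂ) (z : ℂ) : Matrix (Fin 2) (Fin 2) ℂ :=
  !![1, 0; -lam⁻¹ / (z - w), 1]

/-- The entrywise derivative `g′(z)` of `g`. -/
noncomputable def gMat' (w lam : ℂ) (z : ℂ) : Matrix (Fin 2) (Fin 2) ℂ :=
  Matrix.of fun i j => deriv (fun s => gMat w lam s i j) z

/-- `D(z) = [[0, 0], [λ⁻¹/(z-w), 0]]` (which equals `λ·∂_λ g(z)`). -/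
noncomputable def DMat (w lam : ℂ) (z : ℂ) : Matrix (Fin 2) (Fin 2) ℂ :=
  !![0, 0; lam⁻¹ / (z - w), 0]

/-- The Miura connection matrix `A(z) = [[u(z), λ], [1, -u(z)]]` with
`u(z) = -1/(z-w) + h(z)`. -/
noncomputable def AMat (w lam : ℂ) (h : ℂ → ℂ) (z : ℂ) : Matrix (Fin 2) (Fin 2) ℂ :=
  !![-1 / (z - w) + h z, lam; 1, -(-1 / (z - w) + h z)]

/-- The affine gauge transform `B = g A g⁻¹ - g′ g⁻¹ - x·D g⁻¹`. -/
noncomputable def BMat (w lam : ℂ) (h x : ℂ → ℂ) (z : ℂ) : Matrix (Fin 2) (Fin 2) ℂ :=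
  gMat w lam z * AMat w lam h z * (gMat w lam z)⁻¹
    - gMat' w lam z * (gMat w lam z)⁻¹
    - x z • (DMat w lam z * (gMat w lam z)⁻¹)

lemma gMat_inv (w lam z : ℂ) : (gMat w lam z)⁻¹ = !![1, 0; lam⁻¹ / (z - w), 1] := by
  apply Matrix.inv_eq_right_inv
  ext i j
  fin_cases i <;> fin_cases j <;>
    simp [gMat, Matrix.mul_apply, Fin.sum_univ_two, neg_div]

lemma gMat'_eq (w lam z : ℂ) (hz : z ≠ w) :
    gMat' w lam z = !![0, 0; lam⁻¹ / (z - w) ^ 2, 0] := by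
  have hzw : z - w ≠ 0 := sub_ne_zero.mpr hz
  ext i j
  fin_cases i <;> fin_cases j <;>
    simp only [gMat', gMat, Matrix.of_apply, Matrix.cons_val', Matrix.cons_val_zero,
      Matrix.cons_val_one, Matrix.head_cons, Matrix.empty_val', Matrix.cons_val_fin_one,
      Matrix.head_fin_const]
  · simp
  · simp
  · have h1 : HasDerivAt (fun s : ℂ => s - w) 1 z := (hasDerivAt_id z).sub_const w
    have h2 := h1.inv hzw
    have h3 : HasDerivAt (fun s : ℂ => -lam⁻¹ / (s - w)) (lam⁻¹ / (z - w) ^ 2) z := by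
      have := h2.const_mul (-lam⁻¹)
      have heq : -lam⁻¹ * (-1 / (z - w) ^ 2) = lam⁻¹ / (z - w) ^ 2 := by ring
      rw [heq] at this
      simpa only [div_eq_mul_inv, Pi.inv_apply] using this
    simp [h3.deriv]
  · simp

lemma BMat_key (w lam : ℂ) (hlam : lam ≠ 0) (h x : ℂ → ℂ) (z : ℂ) (hz : z ≠ w) :
    BMat w lam h x z
      = !![h z, lam; 1 - lam⁻¹ * (2 * h z + x z) / (z - w), -h z] := by
  have hzw : z - w ≠ 0 := sub_ne_zero.mpr hz
  rw [BMat, gMat_inv, gMat'_eq w lam z hz, gMat, AMat, DMat]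
  rw [Matrix.mul_fin_two, Matrix.mul_fin_two, Matrix.mul_fin_two, Matrix.mul_fin_two,
    Matrix.smul_of]
  ext i j
  fin_cases i <;> fin_cases j <;>
    · simp only [Matrix.sub_apply, Matrix.of_apply, Matrix.cons_val', Matrix.cons_val_zero,
        Matrix.cons_val_one, Matrix.head_cons, Matrix.empty_val', Matrix.cons_val_fin_one,
        Matrix.head_fin_const, Matrix.smul_cons, Matrix.smul_empty, smul_eq_mul,
        Fin.zero_eta, Fin.mk_one]
      generalize hd : z - w = d at hzw ⊢
      field_simp
      try ring_nf
      try field_simp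
      try ring

theorem affine_gauge_regular_iff_bethe_at_simple_pole (w lam : ℂ) (hlam : lam ≠ 0)
    (h x : ℂ → ℂ) (hh : AnalyticAt ℂ h w) (hx : AnalyticAt ℂ x w) :
    -- the explicit form of the affine gauge transform near w
    (∀ᶠ z in 𝓝[≠] w,
      BMat w lam h x z
        = !![h z, lam; 1 - lam⁻¹ * (2 * h z + x z) / (z - w), -h z]) ∧
    -- after adding λ⁻¹(2h(w)+x(w))/(z-w)·E₂₁, it extends analytically to w
    (∃ G : ℂ → Matrix (Fin 2) (Fin 2) ℂ,
      (∀ i j, AnalyticAt ℂ (fun z => G z i j) w) ∧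
      ∀ᶠ z in 𝓝[≠] w,
        G z = BMat w lam h x z
          + (lam⁻¹ * (2 * h w + x w) / (z - w)) • !![0, 0; 1, 0]) ∧
    -- B itself extends analytically to w iff h(w) + x(w)/2 = 0
    ((∃ G : ℂ → Matrix (Fin 2) (Fin 2) ℂ,
      (∀ i j, AnalyticAt ℂ (fun z => G z i j) w) ∧
      ∀ᶠ z in 𝓝[≠] w, G z = BMat w lam h x z) ↔ h w + x w / 2 = 0) := by
  -- f = 2h + x
  set f : ℂ → ℂ := fun z => 2 * h z + x z with hf_def
  have hf : AnalyticAt ℂ f w := (analyticAt_const.mul hh).add hx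
  -- φ = dslope f w, analytic at w
  obtain ⟨p, hp⟩ := hf
  have hφ : AnalyticAt ℂ (dslope f w) w := ⟨_, hp.has_fpower_series_dslope_fslope⟩
  have hφ_eq : ∀ z : ℂ, z ≠ w → dslope f w z = (f z - f w) / (z - w) := by
    intro z hz
    rw [dslope_of_ne f hz, slope_def_field]
  -- the candidate analytic extension
  set G₀ : ℂ → Matrix (Fin 2) (Fin 2) ℂ :=
    fun z => !![h z, lam; 1 - lam⁻¹ * dslope f w z, -h z] with hG₀_def
  have hG₀_an : ∀ i j, AnalyticAt ℂ (fun z => G₀ z i j) w := by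
    intro i j
    fin_cases i <;> fin_cases j
    · exact hh
    · exact analyticAt_const
    · exact analyticAt_const.sub (analyticAt_const.mul hφ)
    · exact hh.neg
  have key2 : ∀ z : ℂ, z ≠ w →
      G₀ z = BMat w lam h x z + (lam⁻¹ * (2 * h w + x w) / (z - w)) • !![0, 0; 1, 0] := by
    intro z hz
    have hzw : z - w ≠ 0 := sub_ne_zero.mpr hz
    rw [BMat_key w lam hlam h x z hz]
    ext i j
    fin_cases i <;> fin_cases j <;>
      simp only [hG₀_def, Matrix.add_apply, Matrix.smul_apply, Matrix.of_apply,
        Matrix.cons_val', Matrix.cons_val_zero, Matrix.cons_val_one, Matrix.head_cons,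
        Matrix.empty_val', Matrix.cons_val_fin_one, Matrix.head_fin_const, smul_eq_mul,
        Fin.zero_eta, Fin.mk_one]
    · ring
    · ring
    · rw [hφ_eq z hz]
      show 1 - lam⁻¹ * ((2 * h z + x z - (2 * h w + x w)) / (z - w)) = _
      field_simp
      ring
    · ring
  refine ⟨?_, ?_, ?_⟩
  · filter_upwards [self_mem_nhdsWithin] with z hz
    exact BMat_key w lam hlam h x z hz
  · exact ⟨G₀, hG₀_an, by
      filter_upwards [self_mem_nhdsWithin] with z hz
      exact key2 z hz⟩
  · constructor
    · rintro ⟨G, hGan, hGeq⟩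
      -- compare G with G₀
      set F : ℂ → ℂ := fun z => (G₀ z 1 0 - G z 1 0) * (z - w) with hF_def
      have hFan : AnalyticAt ℂ F w :=
        ((hG₀_an 1 0).sub (hGan 1 0)).mul ((analyticAt_id).sub analyticAt_const)
      have hFev : ∀ᶠ z in 𝓝[≠] w, F z = lam⁻¹ * f w := by
        filter_upwards [hGeq, self_mem_nhdsWithin] with z hGz hz
        have hzw : z - w ≠ 0 := sub_ne_zero.mpr hz
        have h1 := key2 z hz
        have h2 : G₀ z 1 0 - G z 1 0
            = (lam⁻¹ * (2 * h w + x w) / (z - w)) • (!![0, 0; 1, 0] : Matrix (Fin 2) (Fin 2) ℂ) 1 0 := by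
          rw [h1, hGz]; simp
        rw [hF_def]
        simp only [h2, Matrix.smul_apply, Matrix.of_apply, Matrix.cons_val',
          Matrix.cons_val_zero, Matrix.cons_val_one, Matrix.head_cons, Matrix.empty_val',
          Matrix.cons_val_fin_one, Matrix.head_fin_const, smul_eq_mul, mul_one,
          Fin.zero_eta, Fin.mk_one]
        have hfwv : f w = 2 * h w + x w := rfl
        rw [hfwv]
        field_simp
        try ring
      have hlim1 : Filter.Tendsto F (𝓝[≠] w) (𝓝 (F w)) :=
        (hFan.continuousAt.continuousWithinAt).tendsto
      have hlim2 : Filter.Tendsto F (𝓝[≠] w) (𝓝 (lam⁻¹ * f w)) := by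
        rw [Filter.tendsto_congr' hFev]
        exact tendsto_const_nhds
      have hFw : F w = 0 := by simp [hF_def]
      have : (0 : ℂ) = lam⁻¹ * f w := by
        rw [← hFw]; exact tendsto_nhds_unique hlim1 hlim2
      have hfw : f w = 0 := by
        field_simp at this
        simpa using this.symm
      have : 2 * h w + x w = 0 := hfw
      linear_combination this / 2
    · intro hbethe
      refine ⟨G₀, hG₀_an, ?_⟩
      have hfw : 2 * h w + x w = 0 := by linear_combination 2 * hbethe
      filter_upwards [self_mem_nhdsWithin] with z hz
      rw [key2 z hz, hfw]
      simp
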